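/- Under the hypotheses of the preceding model, the conservation identity Σ_{i ∈ V} α_i (1 − ω_i) = Σ_{I ∈ Ind} π(I) α(E(I)) holds, and moreover Σ_{I ∈ Ind} π(I) α(E(I)) = Σ_{i ∈ V} α_i ω_i. -/

import Mathlib

open Finset

def IsIndep {V : Type*} (G : SimpleGraph V) (I : Finset V) : Prop :=
  ∀ i ∈ I, ∀ j ∈ I, ¬ G.Adj i j

def nbhd {V : Type*} [Fintype V] [DecidableEq V] (G : SimpleGraph V) [DecidableRel G.Adj]
    (A : Finset V) : Finset V :=
  A.biUnion fun i => G.neighborFinset i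

lemma indep_subset {V : Type*} (G : SimpleGraph V) {I J : Finset V} (h : IsIndep G J)
    (hIJ : I ⊆ J) : IsIndep G I :=
  fun i hi j hj => h i (hIJ hi) j (hIJ hj)

lemma mem_nbhd {V : Type*} [Fintype V] [DecidableEq V] (G : SimpleGraph V) [DecidableRel G.Adj]
    {A : Finset V} {i : V} : i ∈ nbhd G A ↔ ∃ j ∈ A, G.Adj j i := by
  simp [nbhd, SimpleGraph.adj_comm]

lemma nbhd_mono {V : Type*} [Fintype V] [DecidableEq V] (G : SimpleGraph V) [DecidableRel G.Adj]
    {I J : Finset V} (h : I ⊆ J) : nbhd G I ⊆ nbhd G J := by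
  intro x hx
  rw [mem_nbhd] at hx ⊢
  obtain ⟨j, hj, ha⟩ := hx
  exact ⟨j, h hj, ha⟩

lemma not_mem_nbhd_of_mem {V : Type*} [Fintype V] [DecidableEq V] (G : SimpleGraph V)
    [DecidableRel G.Adj] {I : Finset V} {i : V} (hind : IsIndep G I) (hi : i ∈ I) :
    i ∉ nbhd G I := by
  rw [mem_nbhd]
  rintro ⟨j, hj, ha⟩
  exact hind j hj i hi ha

lemma indep_insert {V : Type*} [Fintype V] [DecidableEq V] (G : SimpleGraph V)
    [DecidableRel G.Adj] {I : Finset V} {i : V} (hind : IsIndep G I) (hni : i ∉ nbhd G I) :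
    IsIndep G (insert i I) := by
  intro a ha b hb hab
  rw [mem_insert] at ha hb
  rcases ha with rfl | ha <;> rcases hb with rfl | hb
  · exact G.irrefl hab
  · exact hni (mem_nbhd G |>.2 ⟨b, hb, hab.symm⟩)
  · exact hni (mem_nbhd G |>.2 ⟨a, ha, hab⟩)
  · exact hind a ha b hb hab

/-- Conservation identity: `Σ_i α_i (1 − ω_i) = Σ_{I ∈ Ind} π(I) α(E(I))`, and this
common value also equals `Σ_i α_i ω_i`. -/
theorem stmt12 {V : Type*} [Fintype V] [DecidableEq V] (G : SimpleGraph V) [DecidableRel G.Adj]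
    [DecidablePred (IsIndep G)]
    (α : V → ℝ) (hα : ∀ i, 0 < α i) (hα1 : ∑ i, α i = 1)
    (hstab : ∀ I : Finset V, I.Nonempty → IsIndep G I →
      ∑ i ∈ I, α i < ∑ j ∈ nbhd G I, α j)
    (S : Finset (Finset V))
    (hS : S = (Finset.univ : Finset (Finset V)).filter (fun I => I = ∅ ∨ IsIndep G I))
    (Ind : Finset (Finset V))
    (hInd : Ind = (Finset.univ : Finset (Finset V)).filter
      (fun I => I.Nonempty ∧ IsIndep G I))
    (π : Finset V → ℝ)
    (hπpos : ∀ I ∈ S, 0 ≤ π I)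
    (hrec : ∀ I : Finset V, I.Nonempty → IsIndep G I →
      π I * ((∑ j ∈ nbhd G I, α j) - ∑ i ∈ I, α i) = ∑ i ∈ I, α i * π (I.erase i))
    (hnorm : ∑ I ∈ S, π I = 1)
    (ω : V → ℝ)
    (hω : ∀ i, ω i = ∑ I ∈ S.filter (fun I => i ∉ nbhd G I), π I) :
    (∑ i, α i * (1 - ω i) = ∑ I ∈ Ind, π I * ∑ j ∈ nbhd G I, α j) ∧
    (∑ I ∈ Ind, π I * ∑ j ∈ nbhd G I, α j = ∑ i, α i * ω i) := by
  -- membership facts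
  have hmemS : ∀ I ∈ S, IsIndep G I := by
    intro I hI
    rw [hS, mem_filter] at hI
    rcases hI.2 with rfl | h
    · intro a ha; simp at ha
    · exact h
  have hmemInd : ∀ I ∈ Ind, I.Nonempty ∧ IsIndep G I := by
    intro I hI; rw [hInd, mem_filter] at hI; exact hI.2
  have hIndS : ∀ I ∈ Ind, I ∈ S := by
    intro I hI
    rw [hS, mem_filter]
    exact ⟨mem_univ _, Or.inr (hmemInd I hI).2⟩
  have hemptyS : (∅ : Finset V) ∈ S := by
    rw [hS, mem_filter]; exact ⟨mem_univ _, Or.inl rfl⟩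
  have hemptyInd : (∅ : Finset V) ∉ Ind := by
    rw [hInd, mem_filter]; simp
  have hSins : S = insert ∅ Ind := by
    ext I
    rw [hS, hInd, mem_insert, mem_filter, mem_filter]
    constructor
    · rintro ⟨_, rfl | h⟩
      · exact Or.inl rfl
      · rcases I.eq_empty_or_nonempty with rfl | hne
        · exact Or.inl rfl
        · exact Or.inr ⟨mem_univ _, hne, h⟩
    · rintro (rfl | ⟨_, _, h⟩)
      · exact ⟨mem_univ _, Or.inl rfl⟩
      · exact ⟨mem_univ _, Or.inr h⟩
  -- key lemma: ω i = ∑_{I ∈ Ind, i ∈ I} (π I + π (I.erase i))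
  have key : ∀ i, ω i = ∑ I ∈ Ind.filter (fun I => i ∈ I), (π I + π (I.erase i)) := by
    intro i
    rw [hω]
    rw [← sum_filter_add_sum_filter_not (S.filter (fun I => i ∉ nbhd G I)) (fun I => i ∈ I)]
    have h1 : (S.filter (fun I => i ∉ nbhd G I)).filter (fun I => i ∈ I)
        = Ind.filter (fun I => i ∈ I) := by
      ext I
      simp only [mem_filter]
      constructor
      · rintro ⟨⟨hIS, _⟩, hi⟩
        refine ⟨?_, hi⟩
        rw [hInd, mem_filter]
        exact ⟨mem_univ _, ⟨i, hi⟩, hmemS I hIS⟩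
      · rintro ⟨hIInd, hi⟩
        exact ⟨⟨hIndS I hIInd, not_mem_nbhd_of_mem G (hmemInd I hIInd).2 hi⟩, hi⟩
    have h2 : ∑ I ∈ (S.filter (fun I => i ∉ nbhd G I)).filter (fun I => ¬ i ∈ I), π I
        = ∑ I ∈ Ind.filter (fun I => i ∈ I), π (I.erase i) := by
      refine (sum_bij' (fun J _ => J.erase i) (fun I _ => insert i I) ?_ ?_ ?_ ?_ ?_).symm
      · intro J hJ
        simp only [mem_filter] at hJ ⊢
        obtain ⟨hJInd, hiJ⟩ := hJ
        have hind := (hmemInd J hJInd).2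
        have hniJ : i ∉ nbhd G J := not_mem_nbhd_of_mem G hind hiJ
        refine ⟨⟨?_, fun h => hniJ (nbhd_mono G (erase_subset i J) h)⟩, notMem_erase i J⟩
        rw [hS, mem_filter]
        exact ⟨mem_univ _, Or.inr (indep_subset G hind (erase_subset i J))⟩
      · intro I hI
        simp only [mem_filter] at hI ⊢
        obtain ⟨⟨hIS, hin⟩, hiI⟩ := hI
        have hind : IsIndep G (insert i I) := indep_insert G (hmemS I hIS) hin
        refine ⟨?_, mem_insert_self i I⟩
        rw [hInd, mem_filter]
        exact ⟨mem_univ _, insert_nonempty i I, hind⟩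
      · intro J hJ
        simp only [mem_filter] at hJ
        exact insert_erase hJ.2
      · intro I hI
        simp only [mem_filter] at hI
        exact erase_insert hI.2
      · intro J hJ
        rfl
    rw [h1, h2, ← sum_add_distrib]
  -- second identity
  have second : ∑ I ∈ Ind, π I * ∑ j ∈ nbhd G I, α j = ∑ i, α i * ω i := by
    have swap : ∑ i, α i * ω i
        = ∑ I ∈ Ind, ∑ i ∈ I, α i * (π I + π (I.erase i)) := by
      simp_rw [key, mul_sum]
      rw [Finset.sum_comm' (s := univ) (t := fun i => Ind.filter (fun I => i ∈ I))
        (t' := Ind) (s' := fun I => univ.filter (fun i => i ∈ I))]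
      · apply sum_congr rfl
        intro I _
        rw [filter_mem_eq_inter, univ_inter]
      · intro i I
        simp only [mem_filter, mem_univ, true_and, and_comm]
    rw [swap]
    apply sum_congr rfl
    intro I hI
    obtain ⟨hne, hind⟩ := hmemInd I hI
    have := hrec I hne hind
    have expand : ∑ i ∈ I, α i * (π I + π (I.erase i))
        = π I * ∑ i ∈ I, α i + ∑ i ∈ I, α i * π (I.erase i) := by
      rw [mul_sum, ← sum_add_distrib]
      apply sum_congr rfl
      intro i _
      ring
    rw [expand, ← this]
    ring
  refine ⟨?_, second⟩
  -- first identity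
  have hω' : ∀ i, α i * (1 - ω i) = ∑ I ∈ S.filter (fun I => i ∈ nbhd G I), α i * π I := by
    intro i
    rw [← mul_sum]
    congr 1
    rw [hω, ← hnorm, ← sum_filter_add_sum_filter_not S (fun I => i ∈ nbhd G I)]
    ring
  simp_rw [hω']
  rw [Finset.sum_comm' (s := univ) (t := fun i => S.filter (fun I => i ∈ nbhd G I))
      (t' := S) (s' := fun I => univ.filter (fun i => i ∈ nbhd G I))]
  · rw [hSins, sum_insert hemptyInd]
    have : ∑ i ∈ univ.filter (fun i => i ∈ nbhd G (∅ : Finset V)), α i * π ∅ = 0 := by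
      simp [nbhd]
    rw [this, zero_add]
    apply sum_congr rfl
    intro I _
    rw [filter_mem_eq_inter, univ_inter, mul_sum]
    apply sum_congr rfl
    intro i _
    ring
  · intro i I
    simp only [mem_filter, mem_univ, true_and, and_comm]
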